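/- arXiv:1905.03901 — 4 statements merged into one kernel-verified Lean document; each statement's English description precedes it below -/
import Mathlib

section
/- For any sequence a : ℤ → ℝ, any N ∈ ℕ, and λ > 0, M_λ((Δ^N a)[k]) = M_λ((Δ^N (M_λ ∘ a))[k]) for all k ∈ ℤ, where Δ^N denotes the N-fold forward finite difference. -/
/-- Centered modulo operation. -/
noncomputable def cmod (lam f : ℝ) : ℝ :=
  2 * lam * (Int.fract (f / (2 * lam) + 1 / 2) - 1 / 2)

/-- Forward finite difference on sequences. -/
def fdiff (a : ℤ → ℝ) : ℤ → ℝ := fun k => a (k + 1) - a k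

lemma cmod_add_int_mul (lam : ℝ) (hlam : 0 < lam) (x : ℝ) (n : ℤ) :
    cmod lam (x + 2 * lam * n) = cmod lam x := by
  have h2 : (2 : ℝ) * lam ≠ 0 := by positivity
  unfold cmod
  have : (x + 2 * lam * n) / (2 * lam) + 1 / 2
      = (x / (2 * lam) + 1 / 2) + n := by field_simp; ring
  rw [this, Int.fract_add_intCast]

lemma cmod_exists (lam : ℝ) (hlam : 0 < lam) (x : ℝ) :
    ∃ n : ℤ, cmod lam x = x + 2 * lam * n := by
  refine ⟨-⌊x / (2 * lam) + 1 / 2⌋, ?_⟩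
  have h2 : (2 : ℝ) * lam ≠ 0 := by positivity
  unfold cmod Int.fract
  push_cast
  field_simp
  ring

theorem cmod_fdiff_iter_comm (lam : ℝ) (hlam : 0 < lam) (a : ℤ → ℝ) (N : ℕ) (k : ℤ) :
    cmod lam (fdiff^[N] a k) = cmod lam (fdiff^[N] (fun j => cmod lam (a j)) k) := by
  -- there is an integer-valued m with (cmod∘a) j = a j + 2λ m j
  obtain ⟨m, hm⟩ : ∃ m : ℤ → ℤ, ∀ j, cmod lam (a j) = a j + 2 * lam * m j := by
    choose m hm using fun j => cmod_exists lam hlam (a j)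
    exact ⟨m, hm⟩
  -- fdiff preserves this shape
  have key : ∀ (N : ℕ) (a : ℤ → ℝ) (m : ℤ → ℤ),
      fdiff^[N] (fun j => a j + 2 * lam * m j) =
        fun k => fdiff^[N] a k + 2 * lam * (fdiff^[N] (fun j => (m j : ℝ)) k) := by
    intro N
    induction N with
    | zero => intro a m; rfl
    | succ n ih =>
      intro a m
      rw [Function.iterate_succ_apply, Function.iterate_succ_apply,
        Function.iterate_succ_apply]
      have : fdiff (fun j => a j + 2 * lam * m j)
          = fun j => fdiff a j + 2 * lam * ((fun i => (m i : ℝ)) (j+1) - (m j : ℝ)) := by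
        funext j; simp [fdiff]; ring
      rw [this]
      have h2 := ih (fdiff a) (fun j => m (j+1) - m j)
      have e1 : (fun j => fdiff a j + 2 * lam * ((fun i => (m i : ℝ)) (j + 1) - ↑(m j)))
          = fun j => fdiff a j + 2 * lam * ((fun i => ((m (i+1) - m i : ℤ) : ℝ)) j) := by
        funext j; push_cast; ring
      rw [e1, h2]
      have e2 : (fdiff fun j => ((m j : ℝ))) = fun j => ((m (j+1) - m j : ℤ) : ℝ) := by
        funext j; simp [fdiff]
      rw [e2]
  -- the integer-valued difference stays integer-valued
  have int_val : ∀ (N : ℕ) (m : ℤ → ℤ), ∃ M : ℤ → ℤ,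
      fdiff^[N] (fun j => (m j : ℝ)) = fun k => (M k : ℝ) := by
    intro N
    induction N with
    | zero => intro m; exact ⟨m, rfl⟩
    | succ n ih =>
      intro m
      obtain ⟨M, hM⟩ := ih (fun j => m (j+1) - m j)
      refine ⟨M, ?_⟩
      rw [Function.iterate_succ_apply]
      have : fdiff (fun j => (m j : ℝ)) = fun j => ((m (j+1) - m j : ℤ) : ℝ) := by
        funext j; simp [fdiff]
      rw [this, hM]
  obtain ⟨M, hM⟩ := int_val N m
  have hfun : (fun j => cmod lam (a j)) = fun j => a j + 2 * lam * m j := funext hm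
  rw [hfun, key N a m, hM]
  exact (cmod_add_int_mul lam hlam _ _).symm
end

section
/- Let g : ℝ → ℝ be N times continuously differentiable with bounded N-th derivative, T > 0, and let γ[k] = g(kT). Then ‖Δ^N γ‖_∞ ≤ (T e)^N ‖g^{(N)}‖_∞, where e is Euler's number. -/
lemma fdiff_aux (N : ℕ) : ∀ (g : ℝ → ℝ) (T : ℝ), 0 < T → ContDiff ℝ N g →
    ∀ (M : ℝ), (∀ t : ℝ, |iteratedDeriv N g t| ≤ M) →
    ∀ (γ : ℤ → ℝ), (∀ k : ℤ, γ k = g (k * T)) →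
    ∀ k : ℤ, |fdiff^[N] γ k| ≤ T ^ N * M := by
  induction N with
  | zero =>
    intro g T hT hg M hM γ hγ k
    simpa [hγ k] using hM (k * T)
  | succ N ih =>
    intro g T hT hg M hM γ hγ k
    set h : ℝ → ℝ := fun t => g (t + T) - g t with hh_def
    have hgN : ContDiff ℝ N g := hg.of_succ
    have hh : ContDiff ℝ N h :=
      (hgN.comp (contDiff_id.add contDiff_const)).sub hgN
    have hdiff : Differentiable ℝ (iteratedDeriv N g) :=
      hg.differentiable_iteratedDeriv N (by exact_mod_cast Nat.lt_succ_self N)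
    have hiter : ∀ t : ℝ, iteratedDeriv N h t
        = iteratedDeriv N g (t + T) - iteratedDeriv N g t := by
      intro t
      have h1 : iteratedDeriv N h t
          = iteratedDeriv N (fun z => g (z + T)) t - iteratedDeriv N g t := by
        rw [← iteratedDerivWithin_univ, ← iteratedDerivWithin_univ,
          ← iteratedDerivWithin_univ]
        exact iteratedDerivWithin_sub (Set.mem_univ t) uniqueDiffOn_univ
          ((hgN.comp (contDiff_id.add contDiff_const)).contDiffWithinAt) hgN.contDiffWithinAt
      rw [h1, iteratedDeriv_comp_add_const]
    have hM' : ∀ t : ℝ, |iteratedDeriv N h t| ≤ T * M := by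
      intro t
      rw [hiter t]
      have mvt := Convex.norm_image_sub_le_of_norm_deriv_le
        (f := iteratedDeriv N g) (s := Set.univ)
        (fun x _ => hdiff x)
        (fun x _ => by
          rw [← iteratedDeriv_succ]
          simpa using hM x)
        convex_univ (Set.mem_univ t) (Set.mem_univ (t + T))
      have : ‖(t + T) - t‖ = T := by
        simp [abs_of_pos hT]
      rw [this] at mvt
      calc |iteratedDeriv N g (t + T) - iteratedDeriv N g t| ≤ M * T := mvt
        _ = T * M := mul_comm _ _
    have hkey : ∀ k : ℤ, fdiff γ k = h ((k : ℝ) * T) := by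
      intro k
      simp only [fdiff, hγ, hh_def]
      push_cast
      ring_nf
    have := ih h T hT hh (T * M) hM' (fdiff γ) hkey k
    calc |fdiff^[N + 1] γ k| = |fdiff^[N] (fdiff γ) k| := by
          rw [Function.iterate_succ_apply]
      _ ≤ T ^ N * (T * M) := this
      _ = T ^ (N + 1) * M := by ring

theorem fdiff_iter_samples_bound (g : ℝ → ℝ) (N : ℕ) (T : ℝ) (hT : 0 < T)
    (hg : ContDiff ℝ N g) (M : ℝ) (hM : ∀ t : ℝ, |iteratedDeriv N g t| ≤ M)
    (γ : ℤ → ℝ) (hγ : ∀ k : ℤ, γ k = g (k * T)) :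
    ∀ k : ℤ, |fdiff^[N] γ k| ≤ (T * Real.exp 1) ^ N * M := by
  intro k
  have hMnn : 0 ≤ M := (abs_nonneg _).trans (hM 0)
  have h1 := fdiff_aux N g T hT hg M hM γ hγ k
  have h2 : T ^ N ≤ (T * Real.exp 1) ^ N := by
    apply pow_le_pow_left₀ hT.le
    nlinarith [Real.one_le_exp (zero_le_one (α := ℝ)), hT.le]
  exact h1.trans (mul_le_mul_of_nonneg_right h2 hMnn)
end

section
/- Let λ > 0, a : ℤ → ℝ a sequence with M_λ(a[k]) = y[k] for all k, and suppose ‖Δ^N a‖_∞ < λ for some N ∈ ℕ. Then Δ^N a can be computed from y alone: (Δ^N a)[k] = M_λ((Δ^N y)[k]) for all k. -/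
lemma cmod_periodic (lam f : ℝ) (hlam : 0 < lam) (m : ℤ) :
    cmod lam (f + 2 * lam * m) = cmod lam f := by
  unfold cmod
  have h2 : (2 * lam) ≠ 0 := by positivity
  have : (f + 2 * lam * m) / (2 * lam) + 1 / 2
      = (f / (2 * lam) + 1 / 2) + (m : ℝ) := by field_simp; ring
  rw [this, Int.fract_add_intCast]

lemma cmod_eq_self (lam f : ℝ) (hlam : 0 < lam) (h : |f| < lam) :
    cmod lam f = f := by
  unfold cmod
  have h2 : (0:ℝ) < 2 * lam := by positivity
  have hl : -lam < f := neg_lt_of_abs_lt h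
  have hu : f < lam := lt_of_abs_lt h
  have h0 : (0:ℝ) ≤ f / (2 * lam) + 1 / 2 := by
    rw [div_add' _ _ _ (ne_of_gt h2)]
    apply div_nonneg _ (le_of_lt h2)
    nlinarith
  have h1 : f / (2 * lam) + 1 / 2 < 1 := by
    rw [div_add' _ _ _ (ne_of_gt h2), div_lt_one h2]
    nlinarith
  rw [Int.fract_eq_self.mpr ⟨h0, h1⟩]
  field_simp
  ring

lemma fdiff_mul (lam : ℝ) (N : ℕ) (a y : ℤ → ℝ)
    (h : ∀ k : ℤ, ∃ m : ℤ, a k - y k = 2 * lam * m) :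
    ∀ k : ℤ, ∃ m : ℤ, fdiff^[N] a k - fdiff^[N] y k = 2 * lam * m := by
  induction N generalizing a y with
  | zero => simpa using h
  | succ n ih =>
    intro k
    rw [Function.iterate_succ_apply, Function.iterate_succ_apply]
    refine ih (fdiff a) (fdiff y) (fun j => ?_) k
    obtain ⟨m1, hm1⟩ := h (j + 1)
    obtain ⟨m2, hm2⟩ := h j
    exact ⟨m1 - m2, by simp only [fdiff]; push_cast; nlinarith⟩

theorem recover_fdiff_from_modulo (lam : ℝ) (hlam : 0 < lam)
    (a y : ℤ → ℝ) (hy : ∀ k : ℤ, y k = cmod lam (a k)) (N : ℕ)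
    (hbound : ∀ k : ℤ, |fdiff^[N] a k| < lam) :
    ∀ k : ℤ, fdiff^[N] a k = cmod lam (fdiff^[N] y k) := by
  intro k
  have hmul : ∀ j : ℤ, ∃ m : ℤ, a j - y j = 2 * lam * m := by
    intro j
    rw [hy j]
    unfold cmod
    refine ⟨⌊a j / (2 * lam) + 1 / 2⌋, ?_⟩
    have h2 : (2 * lam) ≠ 0 := by positivity
    rw [Int.fract]
    field_simp
    ring
  obtain ⟨m, hm⟩ := fdiff_mul lam N a y hmul k
  have : fdiff^[N] y k = fdiff^[N] a k + 2 * lam * ((-m : ℤ) : ℝ) := by push_cast; linarith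
  rw [this, cmod_periodic lam _ hlam, cmod_eq_self lam _ hlam (hbound k)]
end

section
/- Let λ > 0 and x ∈ ℝ with |x − 2λm| < λ/2 for some integer m (i.e., x is within λ/2 of a point of the lattice 2λℤ). Then the rounding operation x ↦ 2λ⌈⌊x/λ⌋/2⌉ recovers the lattice point exactly: 2λ⌈⌊x/λ⌋/2⌉ = 2λm. -/
theorem rounding_recovers_lattice (lam x : ℝ) (hlam : 0 < lam) (m : ℤ)
    (hx : |x - 2 * lam * (m : ℝ)| < lam / 2) :
    2 * lam * ((⌈((⌊x / lam⌋ : ℤ) : ℝ) / 2⌉ : ℤ) : ℝ) = 2 * lam * (m : ℝ) := by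
  rw [abs_lt] at hx
  have h1 : (2 * m - 1 : ℝ) < x / lam := by
    rw [lt_div_iff₀ hlam]; nlinarith [hx.1]
  have h2 : x / lam < 2 * m + 1 := by
    rw [div_lt_iff₀ hlam]; nlinarith [hx.2]
  have hfl : (2 * m - 1 : ℤ) ≤ ⌊x / lam⌋ := by
    apply Int.le_floor.2; push_cast; linarith
  have hfu : ⌊x / lam⌋ ≤ 2 * m := by
    have : (⌊x / lam⌋ : ℝ) < ((2 * m + 1 : ℤ) : ℝ) := by
      push_cast
      exact (Int.floor_le _).trans_lt h2
    have := Int.lt_iff_add_one_le.mp (by exact_mod_cast this)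
    omega
  have hceil : ⌈((⌊x / lam⌋ : ℤ) : ℝ) / 2⌉ = m := by
    rw [Int.ceil_eq_iff]
    constructor
    · have : ((2 * m - 1 : ℤ) : ℝ) ≤ (⌊x / lam⌋ : ℝ) := by exact_mod_cast hfl
      push_cast at this ⊢; linarith
    · have : ((⌊x / lam⌋ : ℤ) : ℝ) ≤ ((2 * m : ℤ) : ℝ) := by exact_mod_cast hfu
      push_cast at this ⊢; linarith
  rw [hceil]
end
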